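/- Let G be a connected simple graph on a finite vertex type V, let u, v ∈ V and r₁, r₂ ∈ ℕ. If the balls B(u,r₁) and B(v,r₂) are disjoint and there is no edge of G with one endpoint in B(u,r₁) and the other endpoint in B(v,r₂), then dist(u,v) ≥ r₁ + r₂ + 2. -/

import Mathlib

/-- The closed ball of radius `r` around `v` in the graph `G`:
all vertices at distance at most `r` from `v`. -/
def SimpleGraph.closedBall {V : Type*} (G : SimpleGraph V) (v : V) (r : ℕ) : Set V :=
  {x | G.dist v x ≤ r}

lemma aux_dist_getVert_le {V : Type*} {G : SimpleGraph V} (hG : G.Connected) :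
    ∀ {a b : V} (p : G.Walk a b) (n : ℕ), G.dist a (p.getVert n) ≤ n := by
  intro a b p
  induction p with
  | nil => intro n; simp [SimpleGraph.Walk.getVert, SimpleGraph.dist_self]
  | @cons a c b h q ih =>
    intro n
    cases n with
    | zero => simp [SimpleGraph.Walk.getVert, SimpleGraph.dist_self]
    | succ n =>
      have h1 : G.dist a c ≤ 1 := by
        have := G.dist_le (SimpleGraph.Walk.cons h .nil)
        simpa using this
      calc G.dist a ((SimpleGraph.Walk.cons h q).getVert (n+1))
          = G.dist a (q.getVert n) := rfl
        _ ≤ G.dist a c + G.dist c (q.getVert n) := hG.dist_triangle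
        _ ≤ 1 + n := add_le_add h1 (ih n)
        _ = n + 1 := by omega

lemma aux_dist_getVert_right_le {V : Type*} {G : SimpleGraph V} :
    ∀ {a b : V} (p : G.Walk a b) (n : ℕ), G.dist (p.getVert n) b ≤ p.length - n := by
  intro a b p
  induction p with
  | nil => intro n; simp [SimpleGraph.Walk.getVert]
  | @cons a c b h q ih =>
    intro n
    cases n with
    | zero =>
      simpa using G.dist_le (SimpleGraph.Walk.cons h q)
    | succ n =>
      have := ih n
      calc G.dist ((SimpleGraph.Walk.cons h q).getVert (n+1)) b
          = G.dist (q.getVert n) b := rfl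
        _ ≤ q.length - n := ih n
        _ = (SimpleGraph.Walk.cons h q).length - (n+1) := by
            simp [SimpleGraph.Walk.length_cons]

/-- If the balls `B(u,r₁)` and `B(v,r₂)` are disjoint and no edge of `G` joins a vertex of
`B(u,r₁)` to a vertex of `B(v,r₂)`, then `dist(u,v) ≥ r₁ + r₂ + 2`. -/
theorem dist_ge_of_balls_separated {V : Type*} [Fintype V] (G : SimpleGraph V)
    (hG : G.Connected) (u v : V) (r₁ r₂ : ℕ)
    (hdisj : Disjoint (G.closedBall u r₁) (G.closedBall v r₂))
    (hedge : ∀ x ∈ G.closedBall u r₁, ∀ y ∈ G.closedBall v r₂, ¬ G.Adj x y) :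
    r₁ + r₂ + 2 ≤ G.dist u v := by
  by_contra hlt
  push_neg at hlt
  obtain ⟨p, hp⟩ := hG.exists_walk_length_eq_dist u v
  have hvv : v ∈ G.closedBall v r₂ := by simp [SimpleGraph.closedBall, SimpleGraph.dist_self]
  have hr₁ : r₁ < G.dist u v := by
    by_contra h
    push_neg at h
    exact Set.disjoint_left.mp hdisj (show v ∈ G.closedBall u r₁ from h) hvv
  set x := p.getVert r₁ with hx
  set y := p.getVert (r₁ + 1) with hy
  have hxball : x ∈ G.closedBall u r₁ := aux_dist_getVert_le hG p r₁
  have hyball : y ∈ G.closedBall v r₂ := by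
    have h1 : G.dist y v ≤ p.length - (r₁ + 1) := aux_dist_getVert_right_le p (r₁ + 1)
    have : G.dist v y ≤ r₂ := by
      rw [G.dist_comm]
      omega
    exact this
  exact hedge x hxball y hyball (p.adj_getVert_succ (by omega))
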